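/- There exists a set of seven points in ℝ² with pairwise integer distances, no three collinear, no four concyclic, whose diameter (largest pairwise distance) equals 66810. (The distance matrix of such an example has entries as given, e.g. distances 66810, 66555, 66294, 49928, 41238, 40290 from the first point.) -/

import Mathlib

/-- The distance matrix of the second integral heptagon in general position. -/
def D : Matrix (Fin 7) (Fin 7) ℕ :=
  !![    0, 66810, 66555, 66294, 49928, 41238, 40290;
     66810,     0, 32385, 64464, 32258, 25908, 52020;
     66555, 32385,     0, 34191, 16637, 33147, 33405;
     66294, 64464, 34191,     0, 34322, 53244, 26724;
     49928, 32258, 16637, 34322,     0, 20066, 20698;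
     41238, 25908, 33147, 53244, 20066,     0, 32232;
     40290, 52020, 33405, 26724, 20698, 32232,     0]

/-- x-coordinates of the heptagon, scaled by 2227. -/
def hepX : Fin 7 → ℤ := ![0, 148785870, 130739265, 78381054, 98596712, 91548738, 56346330]

/-- y-coordinates of the heptagon, scaled by 2227 and divided by √2002. -/
def hepY : Fin 7 → ℤ := ![0, 0, 1560600, 2796192, 1148736, 162504, 1560600]

def hepR (i : Fin 7) : ℤ := hepX i ^ 2 + 2002 * hepY i ^ 2

def hepDet3 (a b c d e f g h i : ℤ) : ℤ :=
  a*(e*i - f*h) - b*(d*i - f*g) + c*(d*h - e*g)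

/-- Integer concyclicity determinant. -/
def hepC (p q r t : Fin 7) : ℤ :=
  hepR p * hepDet3 (hepX q) (hepY q) 1 (hepX r) (hepY r) 1 (hepX t) (hepY t) 1
  - hepX p * hepDet3 (hepR q) (hepY q) 1 (hepR r) (hepY r) 1 (hepR t) (hepY t) 1
  + hepY p * hepDet3 (hepR q) (hepX q) 1 (hepR r) (hepX r) 1 (hepR t) (hepX t) 1
  - hepDet3 (hepR q) (hepX q) (hepY q) (hepR r) (hepX r) (hepY r) (hepR t) (hepX t) (hepY t)

lemma hep_det4 (a b c d e f g h i j k l m n o p : ℝ) :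
    Matrix.det !![a,b,c,d;e,f,g,h;i,j,k,l;m,n,o,p] =
      a*(f*(k*p-l*o) - g*(j*p-l*n) + h*(j*o-k*n))
      - b*(e*(k*p-l*o) - g*(i*p-l*m) + h*(i*o-k*m))
      + c*(e*(j*p-l*n) - f*(i*p-l*m) + h*(i*n-j*m))
      - d*(e*(j*o-k*n) - f*(i*o-k*m) + g*(i*n-j*m)) := by
  rw [Matrix.det_succ_row_zero]
  simp [Fin.sum_univ_succ, Matrix.det_fin_three, Fin.succAbove]
  ring

lemma hep_collinear_cross {a b c : EuclideanSpace ℝ (Fin 2)}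
    (h : Collinear ℝ ({a, b, c} : Set (EuclideanSpace ℝ (Fin 2)))) :
    (b 0 - a 0) * (c 1 - a 1) - (b 1 - a 1) * (c 0 - a 0) = 0 := by
  rw [collinear_iff_of_mem (Set.mem_insert a _)] at h
  obtain ⟨v, hv⟩ := h
  obtain ⟨rb, hb⟩ := hv b (by simp)
  obtain ⟨rc, hc⟩ := hv c (by simp)
  have hb0 : b 0 = rb * v 0 + a 0 := by rw [hb]; rfl
  have hb1 : b 1 = rb * v 1 + a 1 := by rw [hb]; rfl
  have hc0 : c 0 = rc * v 0 + a 0 := by rw [hc]; rfl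
  have hc1 : c 1 = rc * v 1 + a 1 := by rw [hc]; rfl
  rw [hb0, hb1, hc0, hc1]; ring

lemma hep_circle_eq {a cen : EuclideanSpace ℝ (Fin 2)} {ρ : ℝ}
    (h : dist a cen = ρ) : (a 0 - cen 0)^2 + (a 1 - cen 1)^2 = ρ^2 := by
  rw [EuclideanSpace.dist_eq] at h
  have h2 := congrArg (· ^ 2) h
  simp only [Real.sq_sqrt (by positivity : (0:ℝ) ≤ ∑ i : Fin 2, dist (a i) (cen i) ^ 2)] at h2
  simpa [Fin.sum_univ_two, Real.dist_eq, sq_abs] using h2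

lemma hep_concyclic_det {a b c d cen : EuclideanSpace ℝ (Fin 2)} {ρ : ℝ}
    (ha : dist a cen = ρ) (hb : dist b cen = ρ) (hc : dist c cen = ρ)
    (hd : dist d cen = ρ) :
    Matrix.det !![a 0^2 + a 1^2, a 0, a 1, 1;
                  b 0^2 + b 1^2, b 0, b 1, 1;
                  c 0^2 + c 1^2, c 0, c 1, 1;
                  d 0^2 + d 1^2, d 0, d 1, 1] = 0 := by
  rw [← Matrix.exists_mulVec_eq_zero_iff]
  refine ⟨![1, -2*cen 0, -2*cen 1, cen 0^2 + cen 1^2 - ρ^2], ?_, ?_⟩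
  · intro h
    simpa using congrFun h 0
  · have ca := hep_circle_eq ha
    have cb := hep_circle_eq hb
    have cc := hep_circle_eq hc
    have cd := hep_circle_eq hd
    funext i
    fin_cases i <;>
      simp [Matrix.mulVec, dotProduct, Fin.sum_univ_four]
    · linear_combination ca
    · linear_combination cb
    · linear_combination cc
    · linear_combination cd

/-- There is an integral heptagon in general position with diameter `66810`, whose
distance matrix is `D`. -/
theorem exists_integral_heptagon_diameter_66810 :
    ∃ P : Fin 7 → EuclideanSpace ℝ (Fin 2),
      Function.Injective P ∧
      (∀ i j k : Fin 7, i ≠ j → i ≠ k → j ≠ k →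
        ¬ Collinear ℝ ({P i, P j, P k} : Set (EuclideanSpace ℝ (Fin 2)))) ∧
      (∀ i j k l : Fin 7, i ≠ j → i ≠ k → i ≠ l → j ≠ k → j ≠ l → k ≠ l →
        ¬ ∃ (c : EuclideanSpace ℝ (Fin 2)) (ρ : ℝ), 0 < ρ ∧
            dist (P i) c = ρ ∧ dist (P j) c = ρ ∧ dist (P k) c = ρ ∧ dist (P l) c = ρ) ∧
      (∀ i j : Fin 7, dist (P i) (P j) = (D i j : ℝ)) ∧
      (∀ i j : Fin 7, dist (P i) (P j) ≤ 66810) ∧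
      (∃ i j : Fin 7, dist (P i) (P j) = 66810) := by
  obtain ⟨s, hspos, hs⟩ : ∃ s : ℝ, 0 < s ∧ s^2 = 2002 :=
    ⟨Real.sqrt 2002, by positivity, Real.sq_sqrt (by norm_num)⟩
  have fact1 : ∀ i j : Fin 7,
      (hepX i - hepX j)^2 + 2002*(hepY i - hepY j)^2 = (2227 * (D i j : ℤ))^2 := by decide
  have fact2 : ∀ i j k : Fin 7, i ≠ j → i ≠ k → j ≠ k →
      (hepX j - hepX i)*(hepY k - hepY i) - (hepY j - hepY i)*(hepX k - hepX i) ≠ 0 := by decide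
  have fact3 : ∀ p q r t : Fin 7, p ≠ q → p ≠ r → p ≠ t → q ≠ r → q ≠ t → r ≠ t →
      hepC p q r t ≠ 0 := by decide
  have fact4 : ∀ i j : Fin 7, D i j ≤ 66810 := by intro i; fin_cases i <;> decide
  have fact5 : ∀ i j : Fin 7, D i j = 0 → i = j := by intro i; fin_cases i <;> decide
  set P : Fin 7 → EuclideanSpace ℝ (Fin 2) :=
    (fun i => WithLp.toLp 2 ![(hepX i : ℝ)/2227, (hepY i : ℝ)/2227 * s]) with hPdef
  have hPx : ∀ i, P i 0 = (hepX i : ℝ)/2227 := fun i => rfl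
  have hPy : ∀ i, P i 1 = (hepY i : ℝ)/2227 * s := fun i => rfl
  have hdist : ∀ i j, dist (P i) (P j) = (D i j : ℝ) := by
    intro i j
    rw [EuclideanSpace.dist_eq, Fin.sum_univ_two, Real.dist_eq, Real.dist_eq,
      sq_abs, sq_abs, hPx, hPx, hPy, hPy]
    have h3 : ((hepX i : ℝ) - hepX j)^2 + 2002*((hepY i : ℝ) - hepY j)^2
        = (2227*((D i j : ℕ) : ℝ))^2 := by exact_mod_cast congrArg (Int.cast : ℤ → ℝ) (fact1 i j)
    have h1 : ((hepX i : ℝ)/2227 - (hepX j : ℝ)/2227)^2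
        + ((hepY i : ℝ)/2227*s - (hepY j : ℝ)/2227*s)^2 = ((D i j : ℕ) : ℝ)^2 := by
      linear_combination (((hepY i : ℝ)/2227 - (hepY j : ℝ)/2227)^2) * hs + (1/2227^2) * h3
    rw [h1, Real.sqrt_sq (Nat.cast_nonneg _)]
  refine ⟨P, ?_, ?_, ?_, hdist, ?_, ?_⟩
  · -- injectivity
    intro i j h
    have h0 := hdist i j
    rw [h, dist_self] at h0
    exact fact5 i j (by exact_mod_cast h0.symm)
  · -- no three collinear
    intro i j k hij hik hjk h
    have hc := hep_collinear_cross h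
    rw [hPx, hPx, hPx, hPy, hPy, hPy] at hc
    have h2 : s * ((((hepX j : ℝ) - hepX i)*((hepY k : ℝ) - hepY i)
        - ((hepY j : ℝ) - hepY i)*((hepX k : ℝ) - hepX i)) / 2227^2) = 0 := by
      rw [← hc]; ring
    rcases mul_eq_zero.mp h2 with h3 | h3
    · exact absurd h3 (ne_of_gt hspos)
    · have h4 : ((hepX j : ℝ) - hepX i)*((hepY k : ℝ) - hepY i)
          - ((hepY j : ℝ) - hepY i)*((hepX k : ℝ) - hepX i) = 0 :=
        (div_eq_zero_iff.mp h3).resolve_right (by norm_num)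
      exact fact2 i j k hij hik hjk (by exact_mod_cast h4)
  · -- no four concyclic
    rintro i j k l hij hik hil hjk hjl hkl ⟨cen, ρ, hρ, h1, h2, h3, h4⟩
    have hd0 := hep_concyclic_det h1 h2 h3 h4
    rw [hep_det4] at hd0
    simp only [hPx, hPy] at hd0
    have key : s * ((hepC i j k l : ℝ) / 2227^4) = 0 := by
      rw [← hd0]
      simp only [hepC, hepDet3, hepR]
      push_cast
      rw [show ((2002 : ℝ)) = s^2 from hs.symm]
      ring
    rcases mul_eq_zero.mp key with h5 | h5
    · exact absurd h5 (ne_of_gt hspos)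
    · have h6 : (hepC i j k l : ℝ) = 0 :=
        (div_eq_zero_iff.mp h5).resolve_right (by norm_num)
      exact fact3 i j k l hij hik hil hjk hjl hkl (by exact_mod_cast h6)
  · -- diameter bound
    intro i j
    rw [hdist]
    exact_mod_cast fact4 i j
  · -- diameter attained
    refine ⟨0, 1, ?_⟩
    rw [hdist]
    norm_num [show D 0 1 = 66810 from rfl]
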